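/- Let d, n ∈ ℕ with d ≥ 1, n ≥ 1, let λ > 0, and let φ_1, …, φ_n ∈ ℝ^d satisfy ‖φ_t‖_2 ≤ 1 for all t. Define Σ̂_t := λI_d + Σ_{s=1}^{t} φ_sφ_sᵀ for t = 0, 1, …, n (so Σ̂_0 = λI_d). Then ln det(Σ̂_n) = d ln λ + Σ_{t=1}^{n} ln(1 + φ_tᵀ Σ̂_{t-1}^{-1} φ_t), and ln det(Σ̂_n) ≤ d ln(λ + n/d). -/

import Mathlib

open Matrix Finset

lemma vecMulVec_posSemidef {d : ℕ} (u : Fin d → ℝ) : (vecMulVec u u).PosSemidef := by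
  rw [vecMulVec_eq Unit]
  have : replicateRow Unit u = (replicateCol Unit u)ᴴ := by ext i j; simp
  rw [this]
  exact posSemidef_self_mul_conjTranspose _

lemma det_add_vecMulVec {d : ℕ} (A : Matrix (Fin d) (Fin d) ℝ) (hA : A.PosDef)
    (u : Fin d → ℝ) :
    (A + vecMulVec u u).det = A.det * (1 + u ⬝ᵥ A⁻¹ *ᵥ u) := by
  rw [vecMulVec_eq Unit, det_add_replicateCol_mul_replicateRow (by simp [isUnit_iff_ne_zero, hA.det_pos.ne']) u u]
  congr 1
  rw [det_unique]
  simp only [Matrix.add_apply, Matrix.one_apply_eq, Matrix.mul_apply, replicateCol_apply,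
    replicateRow_apply, dotProduct, mulVec, dotProduct, Finset.sum_mul, Finset.mul_sum]
  rw [Finset.sum_comm]
  ring_nf

lemma trace_eq_sum_eigenvalues {d : ℕ} (A : Matrix (Fin d) (Fin d) ℝ) (hA : A.IsHermitian) :
    A.trace = ∑ i, hA.eigenvalues i := by
  nth_rewrite 1 [hA.spectral_theorem]
  rw [Unitary.conjStarAlgAut_apply]
  rw [Matrix.trace_mul_comm, ← Matrix.mul_assoc]
  have h1 : (star (hA.eigenvectorUnitary : Matrix (Fin d) (Fin d) ℝ)) *
      (hA.eigenvectorUnitary : Matrix (Fin d) (Fin d) ℝ) = 1 :=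
    (Unitary.mem_iff.mp hA.eigenvectorUnitary.2).1
  rw [h1, Matrix.one_mul, trace_diagonal]
  simp

/-- **Elliptical potential (log-determinant) lemma.**  For features of Euclidean norm at
most one and `Σ̂_t = λI + Σ_{s<t} φ_s φ_sᵀ`,
`ln det Σ̂_n = d ln λ + Σ_{t<n} ln(1 + φ_tᵀ Σ̂_t⁻¹ φ_t)` and `ln det Σ̂_n ≤ d ln(λ + n/d)`.
(Here `φ_t`, `Σ̂_t` for `t = 0, …, n−1` play the role of the paper's `φ_{t+1}`, `Σ̂_t`.) -/
theorem elliptical_potential (d n : ℕ) (hd : 1 ≤ d) (hn : 1 ≤ n)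
    (lam : ℝ) (hlam : 0 < lam)
    (φ : ℕ → Fin d → ℝ)
    (hφ : ∀ t < n, Real.sqrt (φ t ⬝ᵥ φ t) ≤ 1)
    (Shat : ℕ → Matrix (Fin d) (Fin d) ℝ)
    (hShat : ∀ t, Shat t = lam • (1 : Matrix (Fin d) (Fin d) ℝ)
        + ∑ s ∈ Finset.range t, vecMulVec (φ s) (φ s)) :
    Real.log (Shat n).det
        = d * Real.log lam
          + ∑ t ∈ Finset.range n, Real.log (1 + φ t ⬝ᵥ (Shat t)⁻¹ *ᵥ φ t) ∧
    Real.log (Shat n).det ≤ d * Real.log (lam + n / d) := by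
  have hdpos : (0:ℝ) < d := by exact_mod_cast hd
  -- positive definiteness of each Shat t
  have hpd : ∀ t, (Shat t).PosDef := by
    intro t
    rw [hShat t]
    refine Matrix.PosDef.add_posSemidef ?_ ?_
    · rw [smul_one_eq_diagonal]
      exact posDef_diagonal_iff.mpr fun _ => hlam
    · exact Finset.sum_induction _ _ (fun a b ha hb => ha.add hb) (Matrix.PosSemidef.zero)
        (fun s _ => vecMulVec_posSemidef (φ s))
  -- quadratic forms nonneg
  have hq : ∀ t, 0 ≤ φ t ⬝ᵥ (Shat t)⁻¹ *ᵥ φ t := by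
    intro t
    have := ((hpd t).inv).posSemidef.dotProduct_mulVec_nonneg (φ t)
    simpa using this
  -- Part 1
  have hstep : ∀ t, (Shat (t+1)).det = (Shat t).det * (1 + φ t ⬝ᵥ (Shat t)⁻¹ *ᵥ φ t) := by
    intro t
    have h1 : Shat (t+1) = Shat t + vecMulVec (φ t) (φ t) := by
      rw [hShat, hShat, Finset.sum_range_succ, add_assoc]
    rw [h1, det_add_vecMulVec _ (hpd t)]
  have hlog : ∀ m, Real.log (Shat m).det
      = d * Real.log lam + ∑ t ∈ Finset.range m, Real.log (1 + φ t ⬝ᵥ (Shat t)⁻¹ *ᵥ φ t) := by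
    intro m
    induction m with
    | zero =>
        rw [hShat 0]
        simp [Real.log_pow, det_smul]
    | succ m ih =>
        rw [hstep m, Real.log_mul (hpd m).det_pos.ne'
          (by linarith [hq m] : (0:ℝ) < 1 + φ m ⬝ᵥ (Shat m)⁻¹ *ᵥ φ m).ne',
          ih, Finset.sum_range_succ, add_assoc]
  refine ⟨hlog n, ?_⟩
  -- Part 2 : via eigenvalues
  set A := Shat n with hAdef
  have hA : A.PosDef := hpd n
  have hH : A.IsHermitian := hA.isHermitian
  have hdet : A.det = ∏ i, hH.eigenvalues i := by simpa using hH.det_eq_prod_eigenvalues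
  have htr : A.trace = ∑ i, hH.eigenvalues i := trace_eq_sum_eigenvalues A hH
  have hev : ∀ i, 0 < hH.eigenvalues i := hA.eigenvalues_pos
  -- trace bound
  have htrace_le : A.trace ≤ d * lam + n := by
    rw [hAdef, hShat n, Matrix.trace_add, Matrix.trace_smul, Matrix.trace_one,
      Matrix.trace_sum]
    have h1 : ∀ t ∈ Finset.range n, (vecMulVec (φ t) (φ t)).trace ≤ 1 := by
      intro t ht
      have ht' := hφ t (Finset.mem_range.mp ht)
      have hnn : 0 ≤ φ t ⬝ᵥ φ t := by
        simpa [dotProduct] using Finset.sum_nonneg (fun i _ => mul_self_nonneg (φ t i))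
      have : φ t ⬝ᵥ φ t ≤ 1 := by
        have := Real.sq_sqrt hnn
        calc φ t ⬝ᵥ φ t = Real.sqrt (φ t ⬝ᵥ φ t) ^ 2 := this.symm
          _ ≤ 1 := pow_le_one₀ (Real.sqrt_nonneg _) ht'
      have htr' : (vecMulVec (φ t) (φ t)).trace = φ t ⬝ᵥ φ t := by
        simp [Matrix.trace, Matrix.diag, vecMulVec_apply, dotProduct]
      linarith [htr' ▸ this]
    calc (lam • (Fintype.card (Fin d) : ℝ)) + ∑ t ∈ Finset.range n, (vecMulVec (φ t) (φ t)).trace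
        ≤ lam * d + ∑ t ∈ Finset.range n, (1:ℝ) := by
          refine add_le_add (by simp [smul_eq_mul, mul_comm]) (Finset.sum_le_sum h1)
      _ = d * lam + n := by simp [mul_comm]
  -- Jensen
  have hjensen : ∑ i : Fin d, (1/(d:ℝ)) • Real.log (hH.eigenvalues i)
      ≤ Real.log (∑ i : Fin d, (1/(d:ℝ)) • hH.eigenvalues i) := by
    refine strictConcaveOn_log_Ioi.concaveOn.le_map_sum
      (fun i _ => by positivity) ?_ (fun i _ => Set.mem_Ioi.mpr (hev i))
    simp [Finset.card_univ]
    field_simp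
  have hsum_eq : ∑ i : Fin d, (1/(d:ℝ)) • hH.eigenvalues i = A.trace / d := by
    rw [htr, ← Finset.smul_sum]
    simp [smul_eq_mul, div_eq_mul_inv, mul_comm]
  have hlogdet : Real.log A.det = ∑ i, Real.log (hH.eigenvalues i) := by
    rw [hdet, Real.log_prod (fun i _ => (hev i).ne')]
  have htrpos : 0 < A.trace / d := by
    rw [htr]
    have : 0 < ∑ i : Fin d, hH.eigenvalues i := by
      refine Finset.sum_pos (fun i _ => hev i) ?_
      exact Finset.univ_nonempty_iff.mpr ⟨⟨0, hd⟩⟩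
    positivity
  calc Real.log A.det = d * ∑ i : Fin d, (1/(d:ℝ)) • Real.log (hH.eigenvalues i) := by
        rw [hlogdet, ← Finset.smul_sum, smul_eq_mul]
        field_simp
    _ ≤ d * Real.log (A.trace / d) := by
        refine mul_le_mul_of_nonneg_left (hjensen.trans_eq (by rw [hsum_eq])) hdpos.le
    _ ≤ d * Real.log (lam + n / d) := by
        refine mul_le_mul_of_nonneg_left (Real.log_le_log htrpos ?_) hdpos.le
        rw [div_le_iff₀ hdpos] at *
        calc A.trace ≤ d * lam + n := htrace_le
          _ = (lam + n / d) * d := by field_simp
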